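/- Let μ > 0, set c = μ/2 + 2/μ, and define q : ℝ → ℝ by q(x) = 1/(1 + e^{μx/2}). Then q satisfies the traveling wave equation q''(x) + c·q'(x) − μ·q(x)·q'(x) + q(x)(1 − q(x)) = 0 for every x ∈ ℝ; moreover q is strictly decreasing, q(x) → 1 as x → −∞, q(x) → 0 as x → +∞, and e^{μx/2}·q(x) → 1 as x → +∞, so the front decays with exponential rate μ/2. -/

import Mathlib

set_option maxHeartbeats 1000000


open Filter

/-- The explicit pushed front of the Fisher-KPP-Burgers equation: for `μ > 0`,
`q(x) = (1 + e^{μx/2})⁻¹` solves `q'' + cq' − μqq' + q(1 − q) = 0` with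
`c = μ/2 + 2/μ`, is strictly decreasing, connects `1` at `−∞` to `0` at `+∞`, and
decays with exponential rate `μ/2`. -/
theorem stmt17 (μ : ℝ) (hμ : 0 < μ) (c : ℝ) (hc : c = μ / 2 + 2 / μ)
    (q : ℝ → ℝ) (hq : ∀ x : ℝ, q x = 1 / (1 + Real.exp (μ * x / 2))) :
    (∀ x : ℝ, deriv (deriv q) x + c * deriv q x - μ * q x * deriv q x
      + q x * (1 - q x) = 0) ∧
    StrictAnti q ∧
    Tendsto q atBot (nhds 1) ∧
    Tendsto q atTop (nhds 0) ∧
    Tendsto (fun x : ℝ => Real.exp (μ * x / 2) * q x) atTop (nhds 1) := by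
  have hqe : q = fun x => 1 / (1 + Real.exp (μ * x / 2)) := funext hq
  set E : ℝ → ℝ := fun x => Real.exp (μ * x / 2) with hE
  have hEpos : ∀ x, 0 < E x := fun x => Real.exp_pos _
  have hEne : ∀ x, 1 + E x ≠ 0 := fun x => by positivity
  -- derivative of E
  have hEderiv : ∀ x, HasDerivAt E (μ / 2 * E x) x := by
    intro x
    have h1 : HasDerivAt (fun x : ℝ => μ * x / 2) (μ / 2) x := by
      simpa using ((hasDerivAt_id x).const_mul μ).div_const 2
    simpa [mul_comm] using h1.exp
  -- derivative of q
  set D : ℝ → ℝ := fun x => -(μ / 2 * E x) / (1 + E x) ^ 2 with hD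
  have hqderiv : ∀ x, HasDerivAt q (D x) x := by
    intro x
    have := ((hEderiv x).const_add 1).inv (hEne x)
    rw [hqe]
    simp only [one_div]; exact this
  have hderivq : deriv q = D := funext fun x => (hqderiv x).deriv
  -- derivative of D
  have hDderiv : ∀ x, HasDerivAt D
      ((-(μ / 2 * (μ / 2 * E x)) * (1 + E x) ^ 2 -
        -(μ / 2 * E x) * (2 * (1 + E x) * (μ / 2 * E x))) / ((1 + E x) ^ 2) ^ 2) x := by
    intro x
    have hnum : HasDerivAt (fun x => -(μ / 2 * E x)) (-(μ / 2 * (μ / 2 * E x))) x :=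
      (((hEderiv x).const_mul (μ / 2))).neg
    have hden : HasDerivAt (fun x => (1 + E x) ^ 2) (2 * (1 + E x) * (μ / 2 * E x)) x := by
      have := ((hEderiv x).const_add 1).pow 2
      exact this.congr_deriv (by norm_num <;> ring)
    exact hnum.div hden (by positivity)
  constructor
  · intro x
    rw [hderivq, (hDderiv x).deriv, hD, hq x, hc]
    have h0 : E x = Real.exp (μ * x / 2) := rfl
    rw [← h0]
    have hne := hEne x
    have hμne : μ ≠ 0 := ne_of_gt hμ
    field_simp
    ring
  refine ⟨?_, ?_, ?_, ?_⟩
  · intro x y hxy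
    rw [hq x, hq y]
    apply one_div_lt_one_div_of_lt (by positivity)
    have : Real.exp (μ * x / 2) < Real.exp (μ * y / 2) := by
      apply Real.exp_lt_exp.2
      have := (mul_lt_mul_iff_right₀ hμ).2 hxy
      linarith
    linarith
  · have hlin : Tendsto (fun x : ℝ => μ * x / 2) atBot atBot := by
      apply Tendsto.atBot_div_const (by norm_num)
      exact tendsto_id.const_mul_atBot hμ
    have hexp : Tendsto (fun x : ℝ => Real.exp (μ * x / 2)) atBot (nhds 0) :=
      Real.tendsto_exp_atBot.comp hlin
    have : Tendsto (fun x : ℝ => 1 / (1 + Real.exp (μ * x / 2))) atBot (nhds 1) := by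
      have := (tendsto_const_nhds.add hexp).inv₀ (by norm_num : (1:ℝ) + 0 ≠ 0)
      simpa [one_div] using this
    simpa [hqe] using this
  · have hlin : Tendsto (fun x : ℝ => μ * x / 2) atTop atTop := by
      apply Tendsto.atTop_div_const (by norm_num)
      exact tendsto_id.const_mul_atTop hμ
    have hexp : Tendsto (fun x : ℝ => Real.exp (μ * x / 2)) atTop atTop :=
      Real.tendsto_exp_atTop.comp hlin
    have : Tendsto (fun x : ℝ => (1 + Real.exp (μ * x / 2))⁻¹) atTop (nhds 0) :=
      (tendsto_atTop_add_const_left atTop 1 hexp).inv_tendsto_atTop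
    simpa [hqe, one_div] using this
  · have hlin : Tendsto (fun x : ℝ => μ * x / 2) atTop atTop := by
      apply Tendsto.atTop_div_const (by norm_num)
      exact tendsto_id.const_mul_atTop hμ
    have hexp : Tendsto (fun x : ℝ => Real.exp (μ * x / 2)) atTop atTop :=
      Real.tendsto_exp_atTop.comp hlin
    have hq0 : Tendsto (fun x : ℝ => (1 + Real.exp (μ * x / 2))⁻¹) atTop (nhds 0) :=
      (tendsto_atTop_add_const_left atTop 1 hexp).inv_tendsto_atTop
    have heq : ∀ x : ℝ, Real.exp (μ * x / 2) * q x
        = 1 - (1 + Real.exp (μ * x / 2))⁻¹ := by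
      intro x
      rw [hq x]
      field_simp
      ring
    have : Tendsto (fun x : ℝ => 1 - (1 + Real.exp (μ * x / 2))⁻¹) atTop (nhds (1 - 0)) :=
      tendsto_const_nhds.sub hq0
    simpa [heq] using this
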